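/- Let ω₂ be a majorant satisfying the Hardy–Littlewood condition and ψ ∈ 𝓛_{ω₂}(𝕋) with seminorm L. Define Q[ψ](z) = (1/2π)∫₀^{2π} \bar{z}e^{it}ψ(e^{it})(1-|z|²)/(1-\bar{z}e^{it})² dt. Then there is a constant M > 0 such that |Q[ψ](rξ)| ≤ M·L·ω₂(1-r) for all ξ ∈ 𝕋 and r ∈ [0,1). -/

import Mathlib

open Complex

/-- `Q[ψ](z) = (1/2π)∫₀^{2π} z̄ e^{it} ψ(e^{it}) (1-|z|²)/(1-z̄e^{it})² dt`. -/
noncomputable def Qop (ψ : ℂ → ℂ) (z : ℂ) : ℂ :=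
  (1 / (2 * Real.pi)) • ∫ t in (0:ℝ)..(2 * Real.pi),
    (starRingEnd ℂ) z * Complex.exp (t * Complex.I) * ψ (Complex.exp (t * Complex.I)) *
      ((1 - ‖z‖ ^ 2 : ℝ) : ℂ) /
        (1 - (starRingEnd ℂ) z * Complex.exp (t * Complex.I)) ^ 2

lemma expI_ne (w : ℂ) (hw : ‖w‖ < 1) (t : ℝ) :
    1 - w * Complex.exp (t * Complex.I) ≠ 0 := by
  intro h
  have h1 : w * Complex.exp (t * Complex.I) = 1 := by linear_combination -h
  have := congrArg (‖·‖) h1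
  rw [norm_mul, Complex.norm_exp_ofReal_mul_I, mul_one, norm_one] at this
  linarith

lemma absSq_one_sub (r s : ℝ) :
    ‖1 - (r:ℂ) * Complex.exp (s * Complex.I)‖ ^ 2
      = 1 - 2*r*Real.cos s + r^2 := by
  rw [← Complex.normSq_eq_norm_sq, Complex.normSq_apply]
  simp only [Complex.sub_re, Complex.sub_im, Complex.one_re, Complex.one_im, Complex.mul_re,
    Complex.mul_im, Complex.ofReal_re, Complex.ofReal_im, Complex.exp_ofReal_mul_I_re,
    Complex.exp_ofReal_mul_I_im]
  nlinarith [Real.sin_sq_add_cos_sq s]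

lemma absSq_exp_sub_one (s : ℝ) :
    ‖Complex.exp (s * Complex.I) - 1‖ ^ 2 = 2 - 2 * Real.cos s := by
  rw [← Complex.normSq_eq_norm_sq, Complex.normSq_apply]
  simp only [Complex.sub_re, Complex.sub_im, Complex.one_re, Complex.one_im,
    Complex.exp_ofReal_mul_I_re, Complex.exp_ofReal_mul_I_im]
  nlinarith [Real.sin_sq_add_cos_sq s]

lemma abs_exp_sub_one_le (s : ℝ) :
    ‖Complex.exp (s * Complex.I) - 1‖ ≤ |s| := by
  have h1 := absSq_exp_sub_one s
  have h2 : 1 - s^2/2 ≤ Real.cos s := Real.one_sub_sq_div_two_le_cos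
  have h3 : (0:ℝ) ≤ ‖Complex.exp (s * Complex.I) - 1‖ := norm_nonneg _
  nlinarith [abs_nonneg s, _root_.sq_abs s]

lemma kern_deriv (w c : ℂ) (hw : ‖w‖ < 1) (t : ℝ) :
    HasDerivAt (fun t : ℝ => -Complex.I * c * (1 - w * Complex.exp (t * Complex.I))⁻¹)
      (w * Complex.exp (t * Complex.I) * c / (1 - w * Complex.exp (t * Complex.I)) ^ 2) t := by
  have h1 : HasDerivAt (fun t : ℝ => (t : ℂ) * Complex.I) Complex.I t := by
    simpa using (hasDerivAt_id t).ofReal_comp.mul_const Complex.I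
  have h2 : HasDerivAt (fun t : ℝ => Complex.exp ((t : ℂ) * Complex.I))
      (Complex.exp ((t:ℂ) * Complex.I) * Complex.I) t := h1.cexp
  have h3 : HasDerivAt (fun t : ℝ => 1 - w * Complex.exp ((t : ℂ) * Complex.I))
      (-(w * (Complex.exp ((t:ℂ) * Complex.I) * Complex.I))) t := (h2.const_mul w).const_sub 1
  have hne := expI_ne w hw t
  have h4 : HasDerivAt (fun t : ℝ => (1 - w * Complex.exp ((t : ℂ) * Complex.I))⁻¹)
      (-((1 - w * Complex.exp ((t:ℂ) * Complex.I)) ^ 2)⁻¹ *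
        (-(w * (Complex.exp ((t:ℂ) * Complex.I) * Complex.I)))) t :=
    (hasDerivAt_inv hne).comp t h3
  have h5 := h4.const_mul (-Complex.I * c)
  convert h5 using 1
  case e'_4 => rfl
  rw [div_eq_mul_inv]
  set X := ((1 - w * Complex.exp ((t:ℂ) * Complex.I)) ^ 2)⁻¹ with hXd
  linear_combination Complex.I_sq * (w * Complex.exp (t*Complex.I) * c * X)

lemma kern_zero (w c : ℂ) (hw : ‖w‖ < 1) :
    (∫ t in (0:ℝ)..(2 * Real.pi),
      w * Complex.exp (t * Complex.I) * c / (1 - w * Complex.exp (t * Complex.I)) ^ 2) = 0 := by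
  have hcont : Continuous fun t : ℝ =>
      w * Complex.exp (t * Complex.I) * c / (1 - w * Complex.exp (t * Complex.I)) ^ 2 := by
    apply Continuous.div
    · fun_prop
    · fun_prop
    · intro t
      exact pow_ne_zero 2 (expI_ne w hw t)
  rw [intervalIntegral.integral_eq_sub_of_hasDerivAt
      (fun t _ => kern_deriv w c hw t) (hcont.intervalIntegrable _ _)]
  have : Complex.exp ((2 * Real.pi : ℝ) * Complex.I) = Complex.exp ((0:ℝ) * Complex.I) := by
    push_cast
    rw [Complex.exp_two_pi_mul_I]
    simp
  rw [this]
  ring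

lemma psi_cont (ω₂ : ℝ → ℝ) (hcont : ContinuousOn ω₂ (Set.Ici 0)) (h0 : ω₂ 0 = 0)
    (ψ : ℂ → ℂ) (L : ℝ)
    (hψ : ∀ ξ ζ : ℂ, ‖ξ‖ = 1 → ‖ζ‖ = 1 →
      ‖ψ ξ - ψ ζ‖ ≤ L * ω₂ (‖ξ - ζ‖)) :
    Continuous (fun t : ℝ => ψ (Complex.exp (t * Complex.I))) := by
  rw [continuous_iff_continuousAt]
  intro t₀
  rw [ContinuousAt, tendsto_iff_dist_tendsto_zero]
  have habs : ∀ t : ℝ, ‖Complex.exp (t*Complex.I)‖ = 1 :=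
    fun t => Complex.norm_exp_ofReal_mul_I t
  have hb : ∀ t : ℝ, dist (ψ (Complex.exp (t*Complex.I))) (ψ (Complex.exp (t₀*Complex.I)))
      ≤ L * ω₂ (‖Complex.exp (t*Complex.I) - Complex.exp (t₀*Complex.I)‖) := by
    intro t
    rw [Complex.dist_eq]
    exact hψ _ _ (habs t) (habs t₀)
  have hf : Continuous (fun t : ℝ =>
      ‖Complex.exp (t*Complex.I) - Complex.exp (t₀*Complex.I)‖) :=
    continuous_norm.comp (by fun_prop)
  have hf0 : Filter.Tendsto (fun t : ℝ =>
      ‖Complex.exp (t*Complex.I) - Complex.exp (t₀*Complex.I)‖)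
      (nhds t₀) (nhdsWithin 0 (Set.Ici 0)) := by
    rw [tendsto_nhdsWithin_iff]
    constructor
    · simpa using hf.tendsto t₀
    · exact Filter.Eventually.of_forall (fun t => norm_nonneg _)
  have hω := ((hcont 0 Set.self_mem_Ici).tendsto).comp hf0
  rw [h0] at hω
  have hLω : Filter.Tendsto (fun t : ℝ =>
      L * ω₂ (‖Complex.exp (t*Complex.I) - Complex.exp (t₀*Complex.I)‖))
      (nhds t₀) (nhds 0) := by
    simpa using hω.const_mul L
  exact squeeze_zero (fun t => dist_nonneg) hb hLω

set_option maxHeartbeats 1000000 in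
/-- Lemma 2.2: `|Q[ψ](rξ)| ≤ M L ω₂(1-r)` for all `ξ ∈ 𝕋`, `r ∈ [0,1)`. -/
theorem Qop_abs_bound (ω₂ : ℝ → ℝ)
    (hcont : ContinuousOn ω₂ (Set.Ici 0))
    (hmono : MonotoneOn ω₂ (Set.Ici 0))
    (hnonneg : ∀ t, 0 ≤ t → 0 ≤ ω₂ t)
    (h0 : ω₂ 0 = 0)
    (hanti : AntitoneOn (fun t => ω₂ t / t) (Set.Ioi 0))
    (M₀ : ℝ) (hM₀ : 0 < M₀)
    (hHL : ∀ lam : ℝ, lam ∈ Set.Ioc 0 Real.pi →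
      lam * ∫ t in lam..Real.pi, ω₂ t / t ^ 2 ≤ M₀ * ω₂ lam)
    (ψ : ℂ → ℂ) (L : ℝ) (hL : 0 ≤ L)
    (hψ : ∀ ξ ζ : ℂ, ‖ξ‖ = 1 → ‖ζ‖ = 1 →
      ‖ψ ξ - ψ ζ‖ ≤ L * ω₂ (‖ξ - ζ‖))
    :
    ∃ M : ℝ, 0 < M ∧ ∀ (ξ : ℂ), ‖ξ‖ = 1 → ∀ r : ℝ, 0 ≤ r → r < 1 →
      ‖Qop ψ ((r : ℂ) * ξ)‖ ≤ M * L * ω₂ (1 - r) := by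
  have hπ := Real.pi_pos
  refine ⟨(2 / Real.pi) * (1 + Real.pi^2 * M₀ / 4), by positivity, ?_⟩
  intro ξ hξ r hr0 hr1
  obtain ⟨θ, hθ⟩ : ∃ θ : ℝ, ξ = Complex.exp ((θ:ℂ) * Complex.I) :=
    ⟨ξ.arg, by
      conv_lhs => rw [← Complex.norm_mul_exp_arg_mul_I ξ]
      rw [hξ, Complex.ofReal_one, one_mul]⟩
  set δ := 1 - r with hδdef
  have hδ0 : 0 < δ := by simp only [hδdef]; linarith
  have hδ1 : δ ≤ 1 := by simp only [hδdef]; linarith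
  have hδπ : δ ≤ Real.pi := le_trans hδ1 (by linarith [Real.pi_gt_three])
  set z : ℂ := (r : ℂ) * ξ with hz
  have habsz : ‖z‖ = r := by
    rw [hz, norm_mul, Complex.norm_real, Real.norm_eq_abs, hξ, mul_one, _root_.abs_of_nonneg hr0]
  have hz1 : ‖z‖ < 1 := by rw [habsz]; exact hr1
  set w : ℂ := (starRingEnd ℂ) z with hw
  have habsw : ‖w‖ < 1 := by rw [hw, Complex.norm_conj]; exact hz1
  set A : ℝ := 1 - r^2 with hA
  have hA0 : 0 ≤ A := by simp only [hA]; nlinarith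
  have hA2δ : A ≤ 2*δ := by simp only [hA, hδdef]; nlinarith
  -- kernel shift identities
  have hwval : w = (r:ℂ) * Complex.exp ((-θ:ℝ) * Complex.I) := by
    rw [hw, hz, hθ, map_mul, ← Complex.exp_conj]
    congr 1
    · simp
    · congr 1
      push_cast
      simp [Complex.conj_I]
  have hwe : ∀ t : ℝ, w * Complex.exp (t * Complex.I)
      = (r:ℂ) * Complex.exp (((t - θ):ℝ) * Complex.I) := by
    intro t
    rw [hwval, mul_assoc, ← Complex.exp_add]
    congr 2
    push_cast
    ring
  have hdiff : ∀ t : ℝ, ‖Complex.exp (t*Complex.I) - ξ‖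
      = ‖Complex.exp (((t-θ):ℝ)*Complex.I) - 1‖ := by
    intro t
    rw [hθ]
    have he : Complex.exp ((t:ℂ)*Complex.I) - Complex.exp ((θ:ℂ)*Complex.I)
        = Complex.exp ((θ:ℂ)*Complex.I) * (Complex.exp (((t-θ):ℝ)*Complex.I) - 1) := by
      rw [mul_sub, mul_one, ← Complex.exp_add]
      congr 2
      push_cast
      ring
    rw [he, norm_mul, Complex.norm_exp_ofReal_mul_I, one_mul]
  -- the main auxiliary function
  set G : ℝ → ℝ := fun s => L * ω₂ (‖Complex.exp ((s:ℂ) * Complex.I) - 1‖) *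
      (r / (1 - 2*r*Real.cos s + r^2)) with hG
  have hDlow : ∀ s : ℝ, δ^2 ≤ 1 - 2*r*Real.cos s + r^2 := by
    intro s
    simp only [hδdef]
    nlinarith [Real.cos_le_one s]
  have hDpos : ∀ s : ℝ, 0 < 1 - 2*r*Real.cos s + r^2 := fun s => lt_of_lt_of_le (by positivity) (hDlow s)
  have habs1 : ∀ s : ℝ, 0 ≤ ‖Complex.exp ((s:ℂ) * Complex.I) - 1‖ :=
    fun s => norm_nonneg _
  have hGcont : Continuous G := by
    apply Continuous.mul
    · apply Continuous.mul continuous_const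
      exact hcont.comp_continuous (continuous_norm.comp (by fun_prop)) habs1
    · apply Continuous.div continuous_const (by fun_prop)
      intro s
      exact (hDpos s).ne'
  have hGnonneg : ∀ s : ℝ, 0 ≤ G s := by
    intro s
    exact mul_nonneg (mul_nonneg hL (hnonneg _ (habs1 s))) (div_nonneg hr0 (hDpos s).le)
  have hGint : ∀ a b : ℝ, IntervalIntegrable G MeasureTheory.volume a b :=
    fun a b => hGcont.intervalIntegrable a b
  -- rewrite Qop as integral of differences
  have hψc := psi_cont ω₂ hcont h0 ψ L hψ
  have hcont1 : Continuous (fun t : ℝ => w * Complex.exp (t*Complex.I) *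
      (ψ (Complex.exp (t*Complex.I)) - ψ ξ) * ((A:ℝ):ℂ) /
        (1 - w * Complex.exp (t*Complex.I))^2) := by
    apply Continuous.div
    · exact ((continuous_const.mul (by fun_prop)).mul (hψc.sub continuous_const)).mul
        continuous_const
    · fun_prop
    · exact fun t => pow_ne_zero 2 (expI_ne w habsw t)
  have hcont0 : Continuous (fun t : ℝ => w * Complex.exp (t*Complex.I) *
      ψ (Complex.exp (t*Complex.I)) * ((A:ℝ):ℂ) /
        (1 - w * Complex.exp (t*Complex.I))^2) := by
    apply Continuous.div
    · exact ((continuous_const.mul (by fun_prop)).mul hψc).mul continuous_const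
    · fun_prop
    · exact fun t => pow_ne_zero 2 (expI_ne w habsw t)
  have hcontk : Continuous (fun t : ℝ => w * Complex.exp (t*Complex.I) *
      (ψ ξ * ((A:ℝ):ℂ)) / (1 - w * Complex.exp (t*Complex.I))^2) := by
    apply Continuous.div
    · fun_prop
    · fun_prop
    · exact fun t => pow_ne_zero 2 (expI_ne w habsw t)
  have key : Qop ψ z = (1/(2*Real.pi)) • ∫ t in (0:ℝ)..(2*Real.pi),
      w * Complex.exp (t*Complex.I) * (ψ (Complex.exp (t*Complex.I)) - ψ ξ) * ((A:ℝ):ℂ) /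
        (1 - w * Complex.exp (t*Complex.I))^2 := by
    rw [Qop]
    congr 1
    rw [← sub_zero (∫ t in (0:ℝ)..(2*Real.pi),
        (starRingEnd ℂ) z * Complex.exp (t * Complex.I) * ψ (Complex.exp (t * Complex.I)) *
          ((1 - ‖z‖ ^ 2 : ℝ) : ℂ) /
          (1 - (starRingEnd ℂ) z * Complex.exp (t * Complex.I)) ^ 2),
      ← kern_zero w (ψ ξ * ((A:ℝ):ℂ)) habsw]
    have heq : ∀ t : ℝ, (starRingEnd ℂ) z * Complex.exp (t * Complex.I) *
        ψ (Complex.exp (t * Complex.I)) * ((1 - ‖z‖ ^ 2 : ℝ) : ℂ) /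
          (1 - (starRingEnd ℂ) z * Complex.exp (t * Complex.I)) ^ 2
        = w * Complex.exp (t*Complex.I) * ψ (Complex.exp (t*Complex.I)) * ((A:ℝ):ℂ) /
          (1 - w * Complex.exp (t*Complex.I))^2 := by
      intro t
      rw [← hw, habsz, ← hA]
    rw [intervalIntegral.integral_congr (fun t _ => heq t),
      ← intervalIntegral.integral_sub (hcont0.intervalIntegrable _ _)
        (hcontk.intervalIntegrable _ _)]
    apply intervalIntegral.integral_congr
    intro t _
    simp only
    rw [div_sub_div_same]
    congr 1
    ring
  -- bound the modulus pointwise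
  have hptw : ∀ t : ℝ, ‖w * Complex.exp (t*Complex.I) *
      (ψ (Complex.exp (t*Complex.I)) - ψ ξ) * ((A:ℝ):ℂ) /
        (1 - w * Complex.exp (t*Complex.I))^2‖ ≤ A * G (t - θ) := by
    intro t
    have he1 : ‖w * Complex.exp (t*Complex.I) *
        (ψ (Complex.exp (t*Complex.I)) - ψ ξ) * ((A:ℝ):ℂ) /
          (1 - w * Complex.exp (t*Complex.I))^2‖
        = r * ‖ψ (Complex.exp (t*Complex.I)) - ψ ξ‖ * A /
          (1 - 2*r*Real.cos (t-θ) + r^2) := by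
      rw [norm_div, norm_pow, norm_mul, norm_mul, norm_mul,
        hw, Complex.norm_conj, habsz, Complex.norm_exp_ofReal_mul_I, mul_one,
        Complex.norm_real, Real.norm_eq_abs, _root_.abs_of_nonneg hA0, hwe t, absSq_one_sub]
    rw [he1]
    have hψb : ‖ψ (Complex.exp (t*Complex.I)) - ψ ξ‖
        ≤ L * ω₂ (‖Complex.exp (((t-θ):ℝ)*Complex.I) - 1‖) := by
      rw [← hdiff t]
      exact hψ _ _ (Complex.norm_exp_ofReal_mul_I t) hξ
    have hD := hDpos (t - θ)
    rw [hG]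
    simp only
    rw [div_le_iff₀ hD]
    have expand : A * (L * ω₂ (‖Complex.exp (((t-θ):ℝ) * Complex.I) - 1‖) *
        (r / (1 - 2*r*Real.cos (t-θ) + r^2))) * (1 - 2*r*Real.cos (t-θ) + r^2)
        = A * (L * ω₂ (‖Complex.exp (((t-θ):ℝ) * Complex.I) - 1‖)) * r := by
      linear_combination (A * (L * ω₂ (‖Complex.exp (((t-θ):ℝ) * Complex.I) - 1‖)) * r) *
        (mul_inv_cancel₀ hD.ne')
    rw [expand]
    have := mul_le_mul_of_nonneg_left hψb (mul_nonneg hr0 hA0)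
    calc r * ‖ψ (Complex.exp (t*Complex.I)) - ψ ξ‖ * A
        = (r * A) * ‖ψ (Complex.exp (t*Complex.I)) - ψ ξ‖ := by ring
      _ ≤ (r * A) * (L * ω₂ (‖Complex.exp (((t-θ):ℝ)*Complex.I) - 1‖)) := this
      _ = A * (L * ω₂ (‖Complex.exp (((t-θ):ℝ)*Complex.I) - 1‖)) * r := by ring
  -- main modulus bound via the integral of G
  have h2π : (0:ℝ) ≤ 2*Real.pi := by positivity
  have hQ1 : ‖Qop ψ z‖ ≤ (1/(2*Real.pi)) *
      ∫ t in (0:ℝ)..(2*Real.pi), A * G (t - θ) := by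
    rw [key, norm_smul, Real.norm_eq_abs,
      _root_.abs_of_nonneg (by positivity : (0:ℝ) ≤ 1/(2*Real.pi))]
    apply mul_le_mul_of_nonneg_left _ (by positivity)
    calc ‖∫ t in (0:ℝ)..(2*Real.pi),
          w * Complex.exp (t*Complex.I) * (ψ (Complex.exp (t*Complex.I)) - ψ ξ) * ((A:ℝ):ℂ) /
            (1 - w * Complex.exp (t*Complex.I))^2‖
        ≤ ∫ t in (0:ℝ)..(2*Real.pi), ‖w * Complex.exp (t*Complex.I) *
            (ψ (Complex.exp (t*Complex.I)) - ψ ξ) * ((A:ℝ):ℂ) /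
            (1 - w * Complex.exp (t*Complex.I))^2‖ :=
          intervalIntegral.norm_integral_le_integral_norm h2π
      _ ≤ ∫ t in (0:ℝ)..(2*Real.pi), A * G (t - θ) := by
          apply intervalIntegral.integral_mono_on h2π
            (hcont1.norm.intervalIntegrable _ _)
            ((continuous_const.mul (hGcont.comp (by fun_prop))).intervalIntegrable _ _)
          exact fun t _ => hptw t
  -- shift the integral by θ and use periodicity
  have hGper : Function.Periodic G (2*Real.pi) := by
    intro s
    simp only [hG]
    congr 2
    · congr 2
      push_cast
      rw [add_mul, Complex.exp_add, Complex.exp_two_pi_mul_I, mul_one]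
    · rw [Real.cos_add_two_pi]
  have hshift : (∫ t in (0:ℝ)..(2*Real.pi), A * G (t - θ))
      = A * ∫ s in (-Real.pi)..Real.pi, G s := by
    rw [intervalIntegral.integral_const_mul]
    congr 1
    rw [intervalIntegral.integral_comp_sub_right (fun s => G s) θ]
    rw [show 2*Real.pi - θ = (0 - θ) + 2*Real.pi by ring]
    rw [hGper.intervalIntegral_add_eq (0-θ) (-Real.pi)]
    rw [show -Real.pi + 2*Real.pi = Real.pi by ring]
  -- evenness
  have hGeven : ∀ s : ℝ, G (-s) = G s := by
    intro s
    have harg : ((-s:ℝ):ℂ) * Complex.I = (starRingEnd ℂ) (((s:ℝ):ℂ) * Complex.I) := by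
      rw [map_mul, Complex.conj_ofReal, Complex.conj_I]
      push_cast
      ring
    have h1 : ‖Complex.exp (((-s:ℝ)) * Complex.I) - 1‖
        = ‖Complex.exp ((s:ℝ) * Complex.I) - 1‖ := by
      rw [harg, Complex.exp_conj]
      rw [show (starRingEnd ℂ) (Complex.exp (((s:ℝ):ℂ)*Complex.I)) - 1
          = (starRingEnd ℂ) (Complex.exp (((s:ℝ):ℂ)*Complex.I) - 1) by rw [map_sub, map_one]]
      rw [Complex.norm_conj]
    simp only [hG]
    rw [h1, Real.cos_neg]
  have hhalf : (∫ s in (-Real.pi)..Real.pi, G s) = 2 * ∫ s in (0:ℝ)..Real.pi, G s := by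
    rw [← intervalIntegral.integral_add_adjacent_intervals (hGint (-Real.pi) 0) (hGint 0 Real.pi)]
    have hneg : (∫ s in (-Real.pi)..(0:ℝ), G s) = ∫ s in (0:ℝ)..Real.pi, G s := by
      have hcn := intervalIntegral.integral_comp_neg (a := (0:ℝ)) (b := Real.pi) (fun s => G s)
      simp only [neg_zero] at hcn
      rw [← hcn]
      exact intervalIntegral.integral_congr (fun x _ => hGeven x)
    rw [hneg]
    ring
  -- near part
  have hωδ : 0 ≤ ω₂ δ := hnonneg δ hδ0.le
  have habs_le : ∀ s : ℝ, 0 ≤ s → ‖Complex.exp ((s:ℝ) * Complex.I) - 1‖ ≤ s :=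
    fun s hs => (abs_exp_sub_one_le s).trans_eq (_root_.abs_of_nonneg hs)
  have hnear : (∫ s in (0:ℝ)..δ, G s) ≤ L * ω₂ δ / δ := by
    have hb : ∀ s ∈ Set.Icc (0:ℝ) δ, G s ≤ L * ω₂ δ / δ^2 := by
      intro s hs
      have hω_le : ω₂ (‖Complex.exp ((s:ℝ) * Complex.I) - 1‖) ≤ ω₂ δ :=
        hmono (habs1 s) hδ0.le ((habs_le s hs.1).trans hs.2)
      have hrD : r / (1 - 2*r*Real.cos s + r^2) ≤ 1/δ^2 :=
        div_le_div₀ (by norm_num) hr1.le (by positivity) (hDlow s)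
      simp only [hG]
      calc L * ω₂ (‖Complex.exp ((s:ℝ) * Complex.I) - 1‖) *
            (r / (1 - 2*r*Real.cos s + r^2))
          ≤ L * ω₂ δ * (1/δ^2) := by
            apply mul_le_mul (mul_le_mul_of_nonneg_left hω_le hL) hrD
              (div_nonneg hr0 (hDpos s).le) (mul_nonneg hL hωδ)
        _ = L * ω₂ δ / δ^2 := by ring
    calc (∫ s in (0:ℝ)..δ, G s) ≤ ∫ _ in (0:ℝ)..δ, L * ω₂ δ / δ^2 :=
          intervalIntegral.integral_mono_on hδ0.le (hGint 0 δ)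
            (intervalIntegrable_const) hb
      _ = δ * (L * ω₂ δ / δ^2) := by
          rw [intervalIntegral.integral_const, smul_eq_mul, sub_zero]
      _ = L * ω₂ δ / δ := by field_simp
  -- far part
  have hIcc_sub : Set.Icc δ Real.pi ⊆ Set.Ici (0:ℝ) := fun x hx => le_trans hδ0.le hx.1
  have hfar : (∫ s in δ..Real.pi, G s)
      ≤ (L * Real.pi^2/4) * (M₀ * ω₂ δ / δ) := by
    have hbcont : ContinuousOn (fun s : ℝ => (L * Real.pi^2/4) * (ω₂ s / s^2))
        (Set.Icc δ Real.pi) := by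
      apply ContinuousOn.mul continuousOn_const
      apply ContinuousOn.div (hcont.mono hIcc_sub) (by fun_prop)
      intro x hx
      have : 0 < x := lt_of_lt_of_le hδ0 hx.1
      positivity
    have hb : ∀ s ∈ Set.Icc δ Real.pi, G s ≤ (L * Real.pi^2/4) * (ω₂ s / s^2) := by
      intro s hs
      have hs0 : 0 < s := lt_of_lt_of_le hδ0 hs.1
      have hω_le : ω₂ (‖Complex.exp ((s:ℝ) * Complex.I) - 1‖) ≤ ω₂ s :=
        hmono (habs1 s) hs0.le (habs_le s hs0.le)
      have hωs : 0 ≤ ω₂ s := hnonneg s hs0.le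
      have hrD : r / (1 - 2*r*Real.cos s + r^2) ≤ Real.pi^2/(4*s^2) := by
        rcases eq_or_lt_of_le hr0 with h | h
        · rw [← h, zero_div]
          positivity
        · have hcos : Real.cos s ≤ 1 - 2/Real.pi^2 * s^2 :=
            Real.cos_le_one_sub_mul_cos_sq (by rw [_root_.abs_of_nonneg hs0.le]; exact hs.2)
          have hπ2 : (0:ℝ) < Real.pi^2 := by positivity
          have hcos2 : Real.pi^2 * Real.cos s ≤ Real.pi^2 - 2*s^2 := by
            calc Real.pi^2 * Real.cos s ≤ Real.pi^2 * (1 - 2/Real.pi^2 * s^2) :=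
                  mul_le_mul_of_nonneg_left hcos hπ2.le
              _ = Real.pi^2 - 2*s^2 := by field_simp
          have hDge : 4*r*s^2/Real.pi^2 ≤ 1 - 2*r*Real.cos s + r^2 := by
            rw [div_le_iff₀ hπ2]
            nlinarith [mul_nonneg hr0 (sub_nonneg.2 hcos2), sq_nonneg (1 - r)]
          have h4 : 0 < 4*r*s^2/Real.pi^2 := by positivity
          calc r / (1 - 2*r*Real.cos s + r^2) ≤ r / (4*r*s^2/Real.pi^2) :=
                div_le_div_of_nonneg_left hr0 h4 hDge
            _ = Real.pi^2/(4*s^2) := by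
                field_simp
      simp only [hG]
      calc L * ω₂ (‖Complex.exp ((s:ℝ) * Complex.I) - 1‖) *
            (r / (1 - 2*r*Real.cos s + r^2))
          ≤ L * ω₂ s * (Real.pi^2/(4*s^2)) := by
            apply mul_le_mul (mul_le_mul_of_nonneg_left hω_le hL) hrD
              (div_nonneg hr0 (hDpos s).le) (mul_nonneg hL hωs)
        _ = (L * Real.pi^2/4) * (ω₂ s / s^2) := by
            field_simp
    have hstep1 : (∫ s in δ..Real.pi, G s)
        ≤ ∫ s in δ..Real.pi, (L * Real.pi^2/4) * (ω₂ s / s^2) := by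
      apply intervalIntegral.integral_mono_on hδπ (hGint δ Real.pi)
      · apply ContinuousOn.intervalIntegrable
        rwa [Set.uIcc_of_le hδπ]
      · exact hb
    have hHLδ := hHL δ ⟨hδ0, hδπ⟩
    have hstep2 : (∫ s in δ..Real.pi, ω₂ s / s^2) ≤ M₀ * ω₂ δ / δ := by
      rw [le_div_iff₀ hδ0]
      calc (∫ s in δ..Real.pi, ω₂ s / s^2) * δ
          = δ * ∫ s in δ..Real.pi, ω₂ s / s^2 := by ring
        _ ≤ M₀ * ω₂ δ := hHLδ
    calc (∫ s in δ..Real.pi, G s)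
        ≤ ∫ s in δ..Real.pi, (L * Real.pi^2/4) * (ω₂ s / s^2) := hstep1
      _ = (L * Real.pi^2/4) * ∫ s in δ..Real.pi, ω₂ s / s^2 :=
          intervalIntegral.integral_const_mul _ _
      _ ≤ (L * Real.pi^2/4) * (M₀ * ω₂ δ / δ) := by
          apply mul_le_mul_of_nonneg_left hstep2 (by positivity)
  -- assemble
  have hG0π : (∫ s in (0:ℝ)..Real.pi, G s)
      = (∫ s in (0:ℝ)..δ, G s) + ∫ s in δ..Real.pi, G s :=
    (intervalIntegral.integral_add_adjacent_intervals (hGint 0 δ) (hGint δ Real.pi)).symm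
  have hGtot : (∫ s in (-Real.pi)..Real.pi, G s)
      ≤ 2 * ((1 + Real.pi^2 * M₀ / 4) * (L * ω₂ δ / δ)) := by
    rw [hhalf, hG0π]
    have : (∫ s in (0:ℝ)..δ, G s) + (∫ s in δ..Real.pi, G s)
        ≤ L * ω₂ δ / δ + (L * Real.pi^2/4) * (M₀ * ω₂ δ / δ) := add_le_add hnear hfar
    have heq : L * ω₂ δ / δ + (L * Real.pi^2/4) * (M₀ * ω₂ δ / δ)
        = (1 + Real.pi^2 * M₀ / 4) * (L * ω₂ δ / δ) := by ring
    rw [heq] at this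
    linarith
  have hfinal : ‖Qop ψ z‖
      ≤ (1/(2*Real.pi)) * (A * (2 * ((1 + Real.pi^2 * M₀ / 4) * (L * ω₂ δ / δ)))) := by
    refine le_trans hQ1 ?_
    rw [hshift]
    apply mul_le_mul_of_nonneg_left (mul_le_mul_of_nonneg_left hGtot hA0) (by positivity)
  refine le_trans hfinal ?_
  have hbound_nonneg : 0 ≤ 2 * ((1 + Real.pi^2 * M₀ / 4) * (L * ω₂ δ / δ)) := by positivity
  calc (1/(2*Real.pi)) * (A * (2 * ((1 + Real.pi^2 * M₀ / 4) * (L * ω₂ δ / δ))))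
      ≤ (1/(2*Real.pi)) * ((2*δ) * (2 * ((1 + Real.pi^2 * M₀ / 4) * (L * ω₂ δ / δ)))) := by
        apply mul_le_mul_of_nonneg_left (mul_le_mul_of_nonneg_right hA2δ hbound_nonneg)
          (by positivity)
    _ = (2 / Real.pi) * (1 + Real.pi^2 * M₀ / 4) * L * ω₂ (1 - r) := by
        rw [← hδdef]
        field_simp
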